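/- Assume Γ(a,b) contains some matrix with support included in Supp(X_0), and let X_∞ be the limit of the IPFP sequence (X_n)_{n≥0}. Then for every (i,j) ∈ Supp(X_0) \ Supp(X_∞), the infinite product R_i(X_0)·C_j(X_1)·R_i(X_2)·C_j(X_3)·⋯ diverges to +∞ (i.e. the partial products tend to +∞). -/

import Mathlib

open Filter Topology

namespace IPFP

variable {p q : ℕ}

/-- Row sums `X(i,+)`. -/
noncomputable def rowSum (X : Matrix (Fin p) (Fin q) ℝ) (i : Fin p) : ℝ := ∑ j, X i j

/-- Column sums `X(+,j)`. -/
noncomputable def colSum (X : Matrix (Fin p) (Fin q) ℝ) (j : Fin q) : ℝ := ∑ i, X i j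

/-- `R_i(X) = X(i,+)/a_i`. -/
noncomputable def Rrat (a : Fin p → ℝ) (X : Matrix (Fin p) (Fin q) ℝ) (i : Fin p) : ℝ :=
  rowSum X i / a i

/-- `C_j(X) = X(+,j)/b_j`. -/
noncomputable def Crat (b : Fin q → ℝ) (X : Matrix (Fin p) (Fin q) ℝ) (j : Fin q) : ℝ :=
  colSum X j / b j

/-- `T_R(X)(i,j) = X(i,j)/R_i(X)`. -/
noncomputable def TR (a : Fin p → ℝ) (X : Matrix (Fin p) (Fin q) ℝ) :
    Matrix (Fin p) (Fin q) ℝ :=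
  fun i j => X i j / Rrat a X i

/-- `T_C(X)(i,j) = X(i,j)/C_j(X)`. -/
noncomputable def TC (b : Fin q → ℝ) (X : Matrix (Fin p) (Fin q) ℝ) :
    Matrix (Fin p) (Fin q) ℝ :=
  fun i j => X i j / Crat b X j

/-- The IPFP sequence: `X_0 = X0`, `X_{2n+1} = T_R(X_{2n})`, `X_{2n+2} = T_C(X_{2n+1})`. -/
noncomputable def ipfp (a : Fin p → ℝ) (b : Fin q → ℝ) (X0 : Matrix (Fin p) (Fin q) ℝ) :
    ℕ → Matrix (Fin p) (Fin q) ℝ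
  | 0 => X0
  | n + 1 => if Even n then TR a (ipfp a b X0 n) else TC b (ipfp a b X0 n)

/-- Membership in `Γ₀`: nonnegative entries, positive row and column sums. -/
def memGamma0 (X : Matrix (Fin p) (Fin q) ℝ) : Prop :=
  (∀ i j, 0 ≤ X i j) ∧ (∀ i, 0 < rowSum X i) ∧ (∀ j, 0 < colSum X j)

/-- Membership in `Γ₁`: member of `Γ₀` with total sum `1`. -/
def memGamma1 (X : Matrix (Fin p) (Fin q) ℝ) : Prop :=
  memGamma0 X ∧ ∑ i, ∑ j, X i j = 1

/-- Membership in `Γ(a,b)`: member of `Γ₀` with row marginals `a` and column marginals `b`. -/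
def memGamma (a : Fin p → ℝ) (b : Fin q → ℝ) (X : Matrix (Fin p) (Fin q) ℝ) : Prop :=
  memGamma0 X ∧ (∀ i, rowSum X i = a i) ∧ (∀ j, colSum X j = b j)

/-- `Supp(X) ⊆ Supp(Y)`. -/
def suppSubset (X Y : Matrix (Fin p) (Fin q) ℝ) : Prop :=
  ∀ i j, 0 < X i j → 0 < Y i j

/-- Membership in `Γ(a,b,X0)`: member of `Γ(a,b)` with support contained in `Supp(X0)`. -/
def memGammaSub (a : Fin p → ℝ) (b : Fin q → ℝ) (X0 X : Matrix (Fin p) (Fin q) ℝ) : Prop :=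
  memGamma a b X ∧ suppSubset X X0

/-- Relative entropy (I-divergence) `D(Y‖X) = Σ_{(i,j) ∈ Supp X} Y(i,j)·ln(Y(i,j)/X(i,j))`
(finite expression; it agrees with the relative entropy whenever `Supp Y ⊆ Supp X`,
with the convention `0·ln 0 = 0`). -/
noncomputable def relEnt (Y X : Matrix (Fin p) (Fin q) ℝ) : ℝ :=
  ∑ i, ∑ j, if 0 < X i j then Y i j * Real.log (Y i j / X i j) else 0

/-- A real sequence converges to `l` at an at least geometric rate:
it tends to `l` and `limsup_n |x_n − l|^{1/n} < 1`. -/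
noncomputable def geomSeq (x : ℕ → ℝ) (l : ℝ) : Prop :=
  Tendsto x atTop (nhds l) ∧
    Filter.limsup (fun n : ℕ => |x n - l| ^ ((n : ℝ)⁻¹)) atTop < 1

/-- A matrix sequence converges to `L` at an at least geometric rate (using the
`ℓ¹` norm on entries): it tends to `L` and `limsup_n ‖X_n − L‖^{1/n} < 1`. -/
noncomputable def geomMat (X : ℕ → Matrix (Fin p) (Fin q) ℝ)
    (L : Matrix (Fin p) (Fin q) ℝ) : Prop :=
  Tendsto X atTop (nhds L) ∧
    Filter.limsup (fun n : ℕ => (∑ i, ∑ j, |X n i j - L i j|) ^ ((n : ℝ)⁻¹)) atTop < 1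

end IPFP

open IPFP

/-- Assume `Γ(a,b)` contains a matrix with support included in
`Supp(X_0)`, and let `X_∞` be the limit of the IPFP sequence. Then for every
`(i,j) ∈ Supp(X_0) \ Supp(X_∞)`, the partial products of
`R_i(X_0)·C_j(X_1)·R_i(X_2)·C_j(X_3)·⋯` tend to `+∞`. -/
theorem ipfp_infinite_product_diverges
    (p q : ℕ) (hp : 2 ≤ p) (hq : 2 ≤ q)
    (a : Fin p → ℝ) (b : Fin q → ℝ)
    (ha : ∀ i, 0 < a i) (hb : ∀ j, 0 < b j)
    (hsa : ∑ i, a i = 1) (hsb : ∑ j, b j = 1)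
    (X0 : Matrix (Fin p) (Fin q) ℝ) (hX0 : memGamma1 X0)
    (h : ∃ S, memGammaSub a b X0 S)
    (Xinf : Matrix (Fin p) (Fin q) ℝ)
    (hlim : Tendsto (ipfp a b X0) atTop (nhds Xinf)) :
    ∀ i j, 0 < X0 i j → ¬ 0 < Xinf i j →
      Tendsto (fun n => ∏ m ∈ Finset.range n,
          (if Even m then Rrat a (ipfp a b X0 m) i else Crat b (ipfp a b X0 m) j))
        atTop atTop := by
  intro i j hX0ij hXinfij
  obtain ⟨⟨X0nn, X0row, X0col⟩, _⟩ := hX0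
  -- invariant along the IPFP sequence
  have inv : ∀ n, (∀ i' j', 0 ≤ ipfp a b X0 n i' j') ∧
      (∀ i', 0 < rowSum (ipfp a b X0 n) i') ∧
      (∀ j', 0 < colSum (ipfp a b X0 n) j') ∧
      (∀ i' j', 0 < X0 i' j' → 0 < ipfp a b X0 n i' j') := by
    intro n
    induction n with
    | zero => exact ⟨X0nn, X0row, X0col, fun _ _ h => h⟩
    | succ n ih =>
      obtain ⟨hnn, hrow, hcol, hsupp⟩ := ih
      set X := ipfp a b X0 n with hX
      by_cases hev : Even n
      · have hstep : ipfp a b X0 (n + 1) = TR a X := by simp [ipfp, hev, hX]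
        have hR : ∀ i', 0 < Rrat a X i' := fun i' => div_pos (hrow i') (ha i')
        rw [hstep]
        refine ⟨fun i' j' => div_nonneg (hnn i' j') (hR i').le, ?_, ?_,
          fun i' j' h => div_pos (hsupp i' j' h) (hR i')⟩
        · intro i'
          have : rowSum (TR a X) i' = rowSum X i' / Rrat a X i' := by
            simp [rowSum, TR, Finset.sum_div]
          rw [this]
          exact div_pos (hrow i') (hR i')
        · intro j'
          have hex : ∃ i', 0 < X i' j' := by
            by_contra hc
            push_neg at hc
            have h1 : colSum X j' ≤ 0 := Finset.sum_nonpos fun i' _ => hc i'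
            linarith [hcol j']
          obtain ⟨i0, hi0⟩ := hex
          refine Finset.sum_pos' (fun i' _ => div_nonneg (hnn i' j') (hR i').le)
            ⟨i0, Finset.mem_univ _, div_pos hi0 (hR i0)⟩
      · have hstep : ipfp a b X0 (n + 1) = TC b X := by simp [ipfp, hev, hX]
        have hC : ∀ j', 0 < Crat b X j' := fun j' => div_pos (hcol j') (hb j')
        rw [hstep]
        refine ⟨fun i' j' => div_nonneg (hnn i' j') (hC j').le, ?_, ?_,
          fun i' j' h => div_pos (hsupp i' j' h) (hC j')⟩
        · intro i'
          have hex : ∃ j', 0 < X i' j' := by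
            by_contra hc
            push_neg at hc
            have h1 : rowSum X i' ≤ 0 := Finset.sum_nonpos fun j' _ => hc j'
            linarith [hrow i']
          obtain ⟨j0, hj0⟩ := hex
          refine Finset.sum_pos' (fun j' _ => div_nonneg (hnn i' j') (hC j').le)
            ⟨j0, Finset.mem_univ _, div_pos hj0 (hC j0)⟩
        · intro j'
          have : colSum (TC b X) j' = colSum X j' / Crat b X j' := by
            simp [colSum, IPFP.TC, Finset.sum_div]
          rw [this]
          exact div_pos (hcol j') (hC j')
  set f : ℕ → ℝ := fun m => if Even m then Rrat a (ipfp a b X0 m) i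
      else Crat b (ipfp a b X0 m) j with hf
  have hfpos : ∀ m, 0 < f m := by
    intro m
    obtain ⟨_, hrow, hcol, _⟩ := inv m
    by_cases hev : Even m
    · simp only [hf, hev, if_true]
      exact div_pos (hrow i) (ha i)
    · simp only [hf, hev, if_false]
      exact div_pos (hcol j) (hb j)
  set P : ℕ → ℝ := fun n => ∏ m ∈ Finset.range n, f m with hP
  have hPpos : ∀ n, 0 < P n := fun n =>
    Finset.prod_pos fun m _ => hfpos m
  -- key identity
  have key : ∀ n, ipfp a b X0 n i j = X0 i j / P n := by
    intro n
    induction n with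
    | zero => simp [hP, ipfp]
    | succ n ih =>
      have hstep : ipfp a b X0 (n + 1) i j = ipfp a b X0 n i j / f n := by
        by_cases hev : Even n
        · simp [ipfp, hev, TR, hf]
        · simp [ipfp, hev, IPFP.TC, hf]
      have hPs : P (n + 1) = P n * f n := Finset.prod_range_succ f n
      rw [hstep, ih, hPs, div_div]
  have hipos : ∀ n, 0 < ipfp a b X0 n i j := fun n => (inv n).2.2.2 i j hX0ij
  have hPeq : ∀ n, P n = X0 i j / ipfp a b X0 n i j := by
    intro n
    rw [key n]
    field_simp
  -- entrywise convergence
  have h1 : Tendsto (fun n => ipfp a b X0 n i j) atTop (𝓝 (Xinf i j)) :=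
    (((continuous_id.matrix_elem i j).tendsto Xinf)).comp hlim
  have hXinf0 : Xinf i j = 0 := by
    have h2 : 0 ≤ Xinf i j := ge_of_tendsto' h1 fun n => (hipos n).le
    have h3 : Xinf i j ≤ 0 := not_lt.mp hXinfij
    linarith
  have h4 : Tendsto (fun n => ipfp a b X0 n i j) atTop (𝓝[>] (0 : ℝ)) := by
    rw [hXinf0] at h1
    exact tendsto_nhdsWithin_of_tendsto_nhds_of_eventually_within _ h1
      (Filter.Eventually.of_forall fun n => hipos n)
  have h5 : Tendsto (fun n => (ipfp a b X0 n i j)⁻¹) atTop atTop :=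
    tendsto_inv_nhdsGT_zero.comp h4
  have h6 : Tendsto P atTop atTop := by
    have : P = fun n => X0 i j * (ipfp a b X0 n i j)⁻¹ := by
      funext n
      rw [hPeq n, div_eq_mul_inv]
    rw [this]
    exact Tendsto.const_mul_atTop hX0ij h5
  exact h6
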